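/- Let n ≥ 2 and 1 ≤ s ≤ n/2 be integers and K a field. Suppose δ : M_n(K) → M_n(K) satisfies δ(xy) = δ(x)y + xδ(y) for all x, y of rank ≤ s with min(rank x, rank y) ≤ 1, and suppose δ(e_{ij}) = 0 for all matrix units. Then for any x = (x_{ij}) ∈ M_n(K) of rank ≤ s and any i, j, the matrix e_{ii}δ(x)e_{jj} equals δ(x_{ij}e_{ij}); in particular δ(x) is determined entrywise by the values δ(a·e_{11}) for a ∈ K. -/

import Mathlib

open Matrix

lemma rank_stdBasisMatrix_le_one {n : ℕ} {K : Type*} [Field K] (i j : Fin n) (c : K) :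
    (single i j c).rank ≤ 1 := by
  have h : single i j c =
      replicateCol (Fin 1) (Pi.single i c) * replicateRow (Fin 1) (Pi.single j (1 : K)) := by
    ext a b
    simp [mul_apply, Matrix.single, Pi.single_apply]
    aesop
  rw [h]
  exact (rank_mul_le_left _ _).trans
    (by simpa using rank_le_card_width (replicateCol (Fin 1) (Pi.single i c)))

theorem stmt_18 {n s : ℕ} (K : Type*) [Field K]
    (hn : 2 ≤ n) (hs1 : 1 ≤ s) (hs2 : 2 * s ≤ n)
    (δ : Matrix (Fin n) (Fin n) K → Matrix (Fin n) (Fin n) K)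
    (hδ : ∀ x y : Matrix (Fin n) (Fin n) K,
      x.rank ≤ s → y.rank ≤ s → min x.rank y.rank ≤ 1 →
      δ (x * y) = δ x * y + x * δ y)
    (hunits : ∀ i j : Fin n, δ (single i j (1 : K)) = 0) :
    ∀ x : Matrix (Fin n) (Fin n) K, x.rank ≤ s →
      ∀ i j : Fin n,
        single i i (1 : K) * δ x * single j j (1 : K) =
          δ (x i j • single i j (1 : K)) := by
  intro x hx i j
  have hr1 : ∀ (a b : Fin n), (single a b (1:K)).rank ≤ s :=
    fun a b => (rank_stdBasisMatrix_le_one a b 1).trans hs1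
  have h1 : δ (single i i (1:K) * x) = single i i (1:K) * δ x := by
    rw [hδ _ _ (hr1 i i) hx (le_trans (min_le_left _ _) (rank_stdBasisMatrix_le_one i i 1)),
      hunits, zero_mul, zero_add]
  have hrank2 : (single i i (1:K) * x).rank ≤ 1 :=
    (rank_mul_le_left _ _).trans (rank_stdBasisMatrix_le_one i i 1)
  have h2 : δ (single i i (1:K) * x * single j j (1:K)) =
      single i i (1:K) * δ x * single j j (1:K) := by
    rw [hδ _ _ (hrank2.trans hs1) (hr1 j j) (le_trans (min_le_left _ _) hrank2),
      hunits, mul_zero, add_zero, h1]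
  rw [← h2]
  apply congrArg
  ext a b
  simp [mul_apply, Matrix.single, ite_and, mul_ite, ite_mul, Finset.sum_ite_eq, Finset.sum_ite_eq']
  split_ifs <;> simp_all
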